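/- On the Heisenberg algebra H_n, the operators ∂_{x_l}, ∂_{y_l}, ∂_h defined on the PBW basis satisfy: [∂_r, ∂_s] = 0 for all r,s; [∂_{x_l}, λ_{x_l}] = id and [∂_{x_l}, λ_r] = 0 for generators r ≠ x_l; [∂_{y_l}, λ_{y_l}] = id and [∂_{y_l}, λ_r] = 0 for r ≠ y_l; [∂_h, λ_h] = id, [∂_h, λ_{y_l}] = −∂_{x_l}, [∂_h, λ_{x_l}] = 0. -/

import Mathlib

/-- A realization of the `n`-th Heisenberg algebra over `k`: a `k`-algebra `H` with
generators `h, x_1, …, x_n, y_1, …, y_n` satisfying `[x_i, y_j] = δ_{ij} h` and all other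
commutators of generators zero, together with its PBW basis `{h^m x^I y^J}`. -/
structure HeisenbergPBW (k : Type*) [Field k] (n : ℕ) (H : Type*) [Ring H]
    [Algebra k H] where
  h : H
  x : Fin n → H
  y : Fin n → H
  basis : Module.Basis (ℕ × (Fin n → ℕ) × (Fin n → ℕ)) k H
  basis_eq : ∀ (m : ℕ) (I J : Fin n → ℕ), basis (m, I, J) =
    h ^ m * (List.ofFn fun i => x i ^ I i).prod * (List.ofFn fun i => y i ^ J i).prod
  comm_xy : ∀ i j, x i * y j - y j * x i = if i = j then h else 0
  comm_xx : ∀ i j, x i * x j = x j * x i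
  comm_yy : ∀ i j, y i * y j = y j * y i
  h_central : ∀ a : H, h * a = a * h

namespace HeisenbergPBW

variable {k : Type*} [Field k] {n : ℕ} {H : Type*} [Ring H] [Algebra k H]

/-- The formal partial derivative `∂_{x_l}` on the PBW basis. -/
noncomputable def pdx (B : HeisenbergPBW k n H) (l : Fin n) : H →ₗ[k] H :=
  B.basis.constr k fun p =>
    (p.2.1 l) • B.basis (p.1, Function.update p.2.1 l (p.2.1 l - 1), p.2.2)

/-- The formal partial derivative `∂_{y_l}` on the PBW basis. -/
noncomputable def pdy (B : HeisenbergPBW k n H) (l : Fin n) : H →ₗ[k] H :=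
  B.basis.constr k fun p =>
    (p.2.2 l) • B.basis (p.1, p.2.1, Function.update p.2.2 l (p.2.2 l - 1))

/-- The formal partial derivative `∂_h` on the PBW basis `h^m x^I y^J`. -/
noncomputable def pdh (B : HeisenbergPBW k n H) : H →ₗ[k] H :=
  B.basis.constr k fun p => p.1 • B.basis (p.1 - 1, p.2.1, p.2.2)

end HeisenbergPBW

section aux
variable {H : Type*} [Ring H]

lemma aux_pow_comm (f c y : H) (hc : c * f = f * c) (hy : y * f = f * y - c) :
    ∀ a : ℕ, y * f ^ a = f ^ a * y - a • (c * f ^ (a - 1)) := by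
  have key : ∀ a : ℕ, y * f ^ (a + 1) = f ^ (a + 1) * y - (a + 1) • (c * f ^ a) := by
    intro a
    induction a with
    | zero => simpa using hy
    | succ b ih =>
      have this1 : f ^ (b + 1) * c = c * f ^ (b + 1) :=
        (Commute.pow_left (Commute.symm hc) (b + 1)).eq
      rw [pow_succ, ← mul_assoc, ih, sub_mul, mul_assoc, hy, mul_sub, smul_mul_assoc,
        mul_assoc, ← pow_succ, succ_nsmul, this1, ← mul_assoc, succ_nsmul, succ_nsmul]
      abel
  intro a
  cases a with
  | zero => simp
  | succ b => simpa using key b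
end aux
section aux
variable {H : Type*} [Ring H]

lemma aux_mul_ofFn : ∀ {n : ℕ} (f : Fin n → H) (I : Fin n → ℕ) (l : Fin n),
    (∀ i j, f i * f j = f j * f i) →
    f l * (List.ofFn fun i => f i ^ I i).prod =
      (List.ofFn fun i => f i ^ Function.update I l (I l + 1) i).prod := by
  intro n
  induction n with
  | zero => exact fun _ _ l _ => l.elim0
  | succ m ih =>
    intro f I l hcomm
    rw [List.ofFn_succ, List.ofFn_succ, List.prod_cons, List.prod_cons]
    induction l using Fin.cases with
    | zero =>
      rw [← mul_assoc, ← pow_succ', Function.update_self]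
      congr 2
    | succ l' =>
      have h1 : f l'.succ * f 0 ^ I 0 = f 0 ^ I 0 * f l'.succ :=
        ((Commute.pow_left (hcomm 0 l'.succ) (I 0)).eq).symm
      rw [← mul_assoc, h1, mul_assoc,
        ih (fun i => f i.succ) (fun i => I i.succ) l' (fun i j => hcomm i.succ j.succ)]
      rw [Function.update_of_ne (Fin.succ_ne_zero l').symm]
      have hupd : Function.update (fun i : Fin m => I i.succ) l' (I l'.succ + 1)
          = fun i => Function.update I l'.succ (I l'.succ + 1) i.succ :=
        (Function.update_comp_eq_of_injective I (Fin.succ_injective m) l' _).symm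
      simp only [hupd]
end aux
section aux
variable {H : Type*} [Ring H]

lemma aux_comm_ofFn {n : ℕ} (f : Fin n → H) (I : Fin n → ℕ) (y : H)
    (h : ∀ i, y * f i = f i * y) :
    y * (List.ofFn fun i => f i ^ I i).prod = (List.ofFn fun i => f i ^ I i).prod * y := by
  refine (Commute.list_prod_right _ _ fun z hz => ?_).eq
  obtain ⟨i, rfl⟩ := List.mem_ofFn.1 hz
  exact Commute.pow_right (h i) _

lemma aux_y_mul_ofFn : ∀ {n : ℕ} (f : Fin n → H) (c y : H) (I : Fin n → ℕ) (l : Fin n),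
    (∀ a : H, c * a = a * c) →
    (∀ i, i ≠ l → y * f i = f i * y) → (y * f l = f l * y - c) →
    y * (List.ofFn fun i => f i ^ I i).prod =
      (List.ofFn fun i => f i ^ I i).prod * y -
        (I l) • (c * (List.ofFn fun i => f i ^ Function.update I l (I l - 1) i).prod) := by
  intro n
  induction n with
  | zero => exact fun _ _ _ _ l _ _ _ => l.elim0
  | succ m ih =>
    intro f c y I l hc hcomm hyl
    rw [List.ofFn_succ, List.prod_cons,
      List.ofFn_succ (f := fun i => f i ^ Function.update I l (I l - 1) i), List.prod_cons]
    induction l using Fin.cases with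
    | zero =>
      have hT : y * (List.ofFn fun i => f i.succ ^ I i.succ).prod
          = (List.ofFn fun i => f i.succ ^ I i.succ).prod * y :=
        aux_comm_ofFn _ _ _ fun i => hcomm i.succ (Fin.succ_ne_zero i)
      have hupd0 : ∀ i : Fin m, Function.update I 0 (I 0 - 1) i.succ = I i.succ :=
        fun i => Function.update_of_ne (Fin.succ_ne_zero i) _ _
      simp only [Function.update_self, hupd0]
      rw [← mul_assoc, aux_pow_comm (f 0) c y (hc (f 0)) hyl (I 0), sub_mul, mul_assoc, hT,
        ← mul_assoc, smul_mul_assoc, mul_assoc, mul_assoc]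
    | succ l' =>
      have h1 : y * f 0 ^ I 0 = f 0 ^ I 0 * y :=
        (Commute.pow_right (hcomm 0 (Fin.succ_ne_zero l').symm) (I 0)).eq
      rw [← mul_assoc, h1, mul_assoc,
        ih (fun i => f i.succ) c y (fun i => I i.succ) l' hc
          (fun i hi => hcomm i.succ (fun e => hi (Fin.succ_injective m e))) hyl]
      rw [mul_sub, ← mul_assoc, mul_smul_comm]
      rw [Function.update_of_ne (Fin.succ_ne_zero l').symm]
      have hupd : ∀ i : Fin m, Function.update (fun i : Fin m => I i.succ) l' (I l'.succ - 1) i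
          = Function.update I l'.succ (I l'.succ - 1) i.succ :=
        fun i => congrFun
          (Function.update_comp_eq_of_injective I (Fin.succ_injective m) l' _).symm i
      simp only [hupd]
      rw [← mul_assoc, ← hc (f 0 ^ I 0), mul_assoc, mul_assoc c]
end aux

namespace HeisenbergPBW
variable {k : Type*} [Field k] {n : ℕ} {H : Type*} [Ring H] [Algebra k H]
variable (B : HeisenbergPBW k n H)

lemma hpow_comm (a : H) (m : ℕ) : a * B.h ^ m = B.h ^ m * a :=
  (Commute.pow_right ((B.h_central a).symm : Commute a B.h) m).eq

lemma mul_h_basis (m : ℕ) (I J : Fin n → ℕ) :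
    B.h * B.basis (m, I, J) = B.basis (m + 1, I, J) := by
  rw [B.basis_eq, B.basis_eq, ← mul_assoc, ← mul_assoc, ← pow_succ']

lemma mul_x_basis (l : Fin n) (m : ℕ) (I J : Fin n → ℕ) :
    B.x l * B.basis (m, I, J) = B.basis (m, Function.update I l (I l + 1), J) := by
  rw [B.basis_eq, B.basis_eq, ← mul_assoc, ← mul_assoc, B.hpow_comm (B.x l) m,
    mul_assoc (B.h ^ m) (B.x l), aux_mul_ofFn B.x I l B.comm_xx]

lemma mul_y_basis (l : Fin n) (m : ℕ) (I J : Fin n → ℕ) :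
    B.y l * B.basis (m, I, J) = B.basis (m, I, Function.update J l (J l + 1))
      - (I l) • B.basis (m + 1, Function.update I l (I l - 1), J) := by
  have hyx : B.y l * B.x l = B.x l * B.y l - B.h := by
    have h1 := B.comm_xy l l; rw [if_pos rfl] at h1; rw [← h1]; abel
  have hyxi : ∀ i, i ≠ l → B.y l * B.x i = B.x i * B.y l := by
    intro i hi; have h1 := B.comm_xy i l; rw [if_neg hi] at h1
    exact (sub_eq_zero.mp h1).symm
  rw [B.basis_eq, B.basis_eq, B.basis_eq]
  rw [← mul_assoc, ← mul_assoc, B.hpow_comm (B.y l) m, mul_assoc (B.h ^ m) (B.y l),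
    aux_y_mul_ofFn B.x B.h (B.y l) I l B.h_central hyxi hyx]
  rw [mul_sub, sub_mul, mul_smul_comm, smul_mul_assoc]
  congr 1
  · rw [mul_assoc, mul_assoc, aux_mul_ofFn B.y J l B.comm_yy, ← mul_assoc]
  · congr 1
    rw [← mul_assoc, ← pow_succ]

lemma pdx_apply (l : Fin n) (m : ℕ) (I J : Fin n → ℕ) :
    B.pdx l (B.basis (m, I, J))
      = (I l) • B.basis (m, Function.update I l (I l - 1), J) := by
  rw [pdx, Module.Basis.constr_basis]

lemma pdy_apply (l : Fin n) (m : ℕ) (I J : Fin n → ℕ) :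
    B.pdy l (B.basis (m, I, J))
      = (J l) • B.basis (m, I, Function.update J l (J l - 1)) := by
  rw [pdy, Module.Basis.constr_basis]

lemma pdh_apply (m : ℕ) (I J : Fin n → ℕ) :
    B.pdh (B.basis (m, I, J)) = m • B.basis (m - 1, I, J) := by
  rw [pdh, Module.Basis.constr_basis]

end HeisenbergPBW

/-- The commutator of two `k`-linear endomorphisms. -/
def brk {k H : Type*} [Field k] [Ring H] [Algebra k H] (f g : H →ₗ[k] H) : H →ₗ[k] H :=
  f.comp g - g.comp f

/-- The commutation relations for the formal partial derivatives `∂_{x_l}, ∂_{y_l}, ∂_h`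
on the Heisenberg algebra `H_n` (char 0): `[∂_r, ∂_s] = 0` for all `r, s`;
`[∂_{x_l}, λ_{x_l}] = id` and `[∂_{x_l}, λ_r] = 0` for generators `r ≠ x_l`;
`[∂_{y_l}, λ_{y_l}] = id` and `[∂_{y_l}, λ_r] = 0` for `r ≠ y_l`; `[∂_h, λ_h] = id`,
`[∂_h, λ_{y_l}] = -∂_{x_l}`, `[∂_h, λ_{x_l}] = 0`. -/
theorem HeisenbergPBW.partials_commutation_relations {k : Type*} [Field k] [CharZero k]
    {n : ℕ} {H : Type*} [Ring H] [Algebra k H] (B : HeisenbergPBW k n H) :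
    (∀ l l', brk (B.pdx l) (B.pdx l') = 0 ∧ brk (B.pdy l) (B.pdy l') = 0 ∧
      brk (B.pdx l) (B.pdy l') = 0) ∧
    (∀ l, brk (B.pdx l) B.pdh = 0 ∧ brk (B.pdy l) B.pdh = 0) ∧
    (∀ l, brk (B.pdx l) (LinearMap.mulLeft k (B.x l)) = LinearMap.id) ∧
    (∀ l l', l ≠ l' → brk (B.pdx l) (LinearMap.mulLeft k (B.x l')) = 0) ∧
    (∀ l l', brk (B.pdx l) (LinearMap.mulLeft k (B.y l')) = 0) ∧
    (∀ l, brk (B.pdx l) (LinearMap.mulLeft k B.h) = 0) ∧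
    (∀ l, brk (B.pdy l) (LinearMap.mulLeft k (B.y l)) = LinearMap.id) ∧
    (∀ l l', l ≠ l' → brk (B.pdy l) (LinearMap.mulLeft k (B.y l')) = 0) ∧
    (∀ l l', brk (B.pdy l) (LinearMap.mulLeft k (B.x l')) = 0) ∧
    (∀ l, brk (B.pdy l) (LinearMap.mulLeft k B.h) = 0) ∧
    (brk B.pdh (LinearMap.mulLeft k B.h) = LinearMap.id) ∧
    (∀ l, brk B.pdh (LinearMap.mulLeft k (B.y l)) = -(B.pdx l)) ∧
    (∀ l, brk B.pdh (LinearMap.mulLeft k (B.x l)) = 0) := by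
  refine ⟨fun l l' => ⟨?_, ?_, ?_⟩, fun l => ⟨?_, ?_⟩, fun l => ?_, fun l l' hne => ?_,
    fun l l' => ?_, fun l => ?_, fun l => ?_, fun l l' hne => ?_, fun l l' => ?_,
    fun l => ?_, ?_, fun l => ?_, fun l => ?_⟩
  all_goals refine B.basis.ext fun ⟨m, I, J⟩ => ?_
  all_goals simp only [brk, LinearMap.sub_apply, LinearMap.comp_apply, LinearMap.zero_apply,
    LinearMap.mulLeft_apply, LinearMap.id_apply, LinearMap.neg_apply, map_nsmul, map_sub,
    B.pdx_apply, B.pdy_apply, B.pdh_apply, B.mul_h_basis, B.mul_x_basis, B.mul_y_basis,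
    smul_sub, smul_smul]
  -- refine_1 : [pdx l, pdx l'] = 0
  · rcases eq_or_ne l l' with rfl | hll
    · exact sub_self _
    · rw [Function.update_of_ne hll, Function.update_of_ne hll.symm,
        Function.update_comm hll, Nat.mul_comm, sub_self]
  -- refine_2 : [pdy l, pdy l'] = 0
  · rcases eq_or_ne l l' with rfl | hll
    · exact sub_self _
    · rw [Function.update_of_ne hll, Function.update_of_ne hll.symm,
        Function.update_comm hll, Nat.mul_comm, sub_self]
  -- refine_3 : [pdx l, pdy l'] = 0
  · rw [Nat.mul_comm, sub_self]
  -- refine_4 : [pdx l, pdh] = 0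
  · rw [Nat.mul_comm, sub_self]
  -- refine_5 : [pdy l, pdh] = 0
  · rw [Nat.mul_comm, sub_self]
  -- refine_6 : [pdx l, λ_{x l}] = id
  · simp only [Function.update_idem, Function.update_self, Nat.add_sub_cancel,
      Function.update_eq_self]
    cases hIl : I l with
    | zero => simp [hIl]
    | succ t =>
      rw [Nat.succ_sub_one, ← hIl, Function.update_eq_self, succ_nsmul, add_sub_cancel_left]
  -- refine_7 : [pdx l, λ_{x l'}] = 0, l ≠ l'
  · rw [Function.update_of_ne hne, Function.update_of_ne hne.symm,
      Function.update_comm hne, sub_self]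
  -- refine_8 : [pdx l, λ_{y l'}] = 0
  · rcases eq_or_ne l l' with rfl | hll
    · simp only [Function.update_self, Function.update_idem]
      abel
    · rw [Function.update_of_ne hll, Function.update_of_ne hll.symm,
        Function.update_comm hll, Nat.mul_comm]
      abel
  -- refine_9 : [pdx l, λ_h] = 0
  · exact sub_self _
  -- refine_10 : [pdy l, λ_{y l}] = id
  · simp only [Function.update_idem, Function.update_self, Nat.add_sub_cancel,
      Function.update_eq_self, Nat.mul_comm (I l) (J l)]
    rw [sub_sub_sub_cancel_right]
    cases hJl : J l with
    | zero => simp [hJl]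
    | succ t =>
      rw [Nat.succ_sub_one, ← hJl, Function.update_eq_self, succ_nsmul, add_sub_cancel_left]
  -- refine_11 : [pdy l, λ_{y l'}] = 0, l ≠ l'
  · rw [Function.update_of_ne hne, Function.update_of_ne hne.symm,
      Function.update_comm hne, Nat.mul_comm]
    abel
  -- refine_12 : [pdy l, λ_{x l'}] = 0
  · exact sub_self _
  -- refine_13 : [pdy l, λ_h] = 0
  · exact sub_self _
  -- refine_14 : [pdh, λ_h] = id
  · rw [Nat.add_sub_cancel]
    cases m with
    | zero => simp
    | succ t =>
      rw [Nat.succ_sub_one, succ_nsmul, add_sub_cancel_left]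
  -- refine_15 : [pdh, λ_{y l}] = -pdx l
  · rw [Nat.add_sub_cancel]
    cases m with
    | zero => simp
    | succ t =>
      rw [Nat.succ_sub_one]
      module
  -- refine_16 : [pdh, λ_{x l}] = 0
  · exact sub_self _
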